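/- Let T be a densely defined closed paranormal operator in H with N(T) = N(T*). Then the minimum modulus m(T) = inf{‖Tx‖ : x ∈ D(T), ‖x‖ = 1} equals the distance from 0 to σ(T). -/

import Mathlib

open scoped InnerProductSpace
open LinearPMap

noncomputable section

variable {H : Type*} [NormedAddCommGroup H] [InnerProductSpace ℂ H] [CompleteSpace H]

/-- `T` is paranormal: `‖Tx‖² ≤ ‖T²x‖ ‖x‖` for all `x ∈ D(T²)`. -/
def Paranormal (T : H →ₗ.[ℂ] H) : Prop :=
  ∀ (x : T.domain) (h : T x ∈ T.domain), ‖T x‖ ^ 2 ≤ ‖T ⟨T x, h⟩‖ * ‖(x : H)‖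

/-- The operator `T - μ • I`, with the same domain as `T`. -/
def shiftOp (T : H →ₗ.[ℂ] H) (μ : ℂ) : H →ₗ.[ℂ] H :=
  ⟨T.domain, T.toFun - μ • T.domain.subtype⟩

/-- `T` is bijective from its domain onto `H` with a bounded everywhere-defined inverse. -/
def HasBoundedInverse (T : H →ₗ.[ℂ] H) : Prop :=
  ∃ S : H →L[ℂ] H, (∀ y : H, ∃ hy : S y ∈ T.domain, T ⟨S y, hy⟩ = y) ∧
    ∀ x : T.domain, S (T x) = (x : H)

/-- The spectrum of a (possibly unbounded) operator `T`. -/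
def pSpectrum (T : H →ₗ.[ℂ] H) : Set ℂ :=
  {μ | ¬ HasBoundedInverse (shiftOp T μ)}

/-- `μ` is an isolated point of the spectrum of `T`. -/
def IsolatedSpectralPoint (T : H →ₗ.[ℂ] H) (μ : ℂ) : Prop :=
  μ ∈ pSpectrum T ∧ ∃ ε > 0, ∀ ν ∈ pSpectrum T, ν ≠ μ → ε ≤ dist ν μ

open Classical in
/-- The resolvent `(T - z)⁻¹` as a bounded operator (junk value `0` if `z ∈ σ(T)`). -/
def resolventOp (T : H →ₗ.[ℂ] H) (z : ℂ) : H →L[ℂ] H :=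
  if h : HasBoundedInverse (shiftOp T z) then h.choose else 0

/-- The Riesz projection `E_μ = (2πi)⁻¹ ∮_{|z-μ|=r} (z - T)⁻¹ dz`
(note `(z - T)⁻¹ = -(T - z)⁻¹`). -/
def rieszProjection (T : H →ₗ.[ℂ] H) (μ : ℂ) (r : ℝ) : H →L[ℂ] H :=
  -(2 * Real.pi * Complex.I)⁻¹ • ∮ z in C(μ, r), resolventOp T z

/-- The kernel `N(T - μ I)` as a subset of `H`. -/
def kernelSet (T : H →ₗ.[ℂ] H) (μ : ℂ) : Set H :=
  {x | ∃ h : x ∈ T.domain, T ⟨x, h⟩ = μ • x}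

/-- The range `R(T - μ I)` as a subset of `H`. -/
def rangeSet (T : H →ₗ.[ℂ] H) (μ : ℂ) : Set H :=
  Set.range fun x : T.domain => T x - μ • (x : H)


section Aux
set_option linter.unusedSectionVars false
set_option linter.unusedVariables false
open scoped ENNReal NNReal

variable {H : Type*} [NormedAddCommGroup H] [InnerProductSpace ℂ H] [CompleteSpace H]

lemma shiftOp_apply (T : H →ₗ.[ℂ] H) (μ : ℂ) (x : T.domain) :
    shiftOp T μ x = T x - μ • (x : H) := rfl

lemma shiftOp_zero_apply (T : H →ₗ.[ℂ] H) (x : T.domain) :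
    shiftOp T 0 x = T x := by
  rw [shiftOp_apply, zero_smul, sub_zero]

lemma exists_boundedInverse (T : H →ₗ.[ℂ] H) (hdense : Dense (T.domain : Set H))
    (hclosed : T.IsClosed) (hker : kernelSet T 0 = kernelSet (T†) 0)
    {c : ℝ} (hc : 0 < c) (hlb : ∀ x : T.domain, c * ‖(x : H)‖ ≤ ‖T x‖) :
    ∃ S : H →L[ℂ] H, (∀ y : H, ∃ hy : S y ∈ T.domain, T ⟨S y, hy⟩ = y) ∧
      (∀ x : T.domain, S (T x) = (x : H)) ∧ ∀ y, ‖S y‖ ≤ c⁻¹ * ‖y‖ := by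
  -- the range of T
  set R : Submodule ℂ H := LinearMap.range T.toFun with hR
  -- R is closed
  have hRclosed : IsClosed (R : Set H) := by
    apply IsSeqClosed.isClosed
    intro u p hu hup
    choose x hx using hu
    have hcauchy : CauchySeq fun n => ((x n : H)) := by
      have hucauchy : CauchySeq u := hup.cauchySeq
      rw [Metric.cauchySeq_iff] at hucauchy ⊢
      intro ε hε
      obtain ⟨N, hN⟩ := hucauchy (c * ε) (by positivity)
      refine ⟨N, fun n hn m hm => ?_⟩
      have h1 := hlb (x n - x m)
      have h2 : T (x n - x m) = u n - u m := by
        rw [T.map_sub]; exact congrArg₂ Sub.sub (hx n) (hx m)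
      rw [h2] at h1
      have : dist (u n) (u m) < c * ε := hN n hn m hm
      rw [dist_eq_norm] at this ⊢
      push_cast at h1
      nlinarith [norm_nonneg ((x n : H) - (x m : H))]
    obtain ⟨q, hq⟩ := cauchySeq_tendsto_of_complete hcauchy
    have hgraph : (q, p) ∈ T.graph := by
      have : IsClosed (T.graph : Set (H × H)) := hclosed
      have htd : Filter.Tendsto (fun n => ((x n : H), u n)) Filter.atTop (nhds (q, p)) :=
        hq.prodMk_nhds hup
      refine this.mem_of_tendsto htd ?_
      filter_upwards with n
      rw [← hx n]
      exact T.mem_graph (x n)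
    rw [LinearPMap.mem_graph_iff] at hgraph
    obtain ⟨z, hz1, hz2⟩ := hgraph
    exact ⟨z, hz2⟩
  -- R = ⊤
  have hRtop : R = ⊤ := by
    haveI : CompleteSpace R := hRclosed.completeSpace_coe
    rw [← Submodule.orthogonal_eq_bot_iff, Submodule.eq_bot_iff]
    intro y hy
    have hy' : ∀ x : T.domain, (inner ℂ y (T x) : ℂ) = 0 := by
      intro x
      have hmemR : (T x) ∈ R := LinearMap.mem_range_self _ x
      have := (Submodule.mem_orthogonal R y).mp hy _ hmemR
      rwa [inner_eq_zero_symm] at this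
    have hmem : y ∈ (T†).domain :=
      LinearPMap.mem_adjoint_domain_of_exists y ⟨0, fun x => by simp [hy' x]⟩
    have happ : (T†) ⟨y, hmem⟩ = 0 :=
      LinearPMap.adjoint_apply_eq hdense ⟨y, hmem⟩ (fun x => by simp [hy' x])
    have hyk : y ∈ kernelSet (T†) 0 := ⟨hmem, by rw [happ, zero_smul]⟩
    rw [← hker] at hyk
    obtain ⟨h', hTy⟩ := hyk
    have := hlb ⟨y, h'⟩
    rw [hTy, zero_smul, norm_zero] at this
    have : ‖y‖ ≤ 0 := by nlinarith [norm_nonneg y]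
    simpa using le_antisymm this (norm_nonneg y)
  -- bijectivity
  have hinj : Function.Injective T.toFun := by
    intro x x' hxx
    have := hlb (x - x')
    rw [T.map_sub] at this
    have hz : T x - T x' = 0 := by
      have : T.toFun x = T.toFun x' := hxx
      simpa [sub_eq_zero] using this
    rw [hz, norm_zero] at this
    have : ‖((x : H) - (x' : H))‖ ≤ 0 := by
      push_cast at this
      nlinarith [norm_nonneg ((x : H) - (x' : H))]
    have hno : ‖(x : H) - (x' : H)‖ = 0 := le_antisymm this (norm_nonneg _)
    exact Subtype.ext (sub_eq_zero.mp (norm_eq_zero.mp hno))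
  have hsurj : Function.Surjective T.toFun := by
    intro y
    have : y ∈ R := hRtop ▸ Submodule.mem_top
    exact this
  let e : T.domain ≃ₗ[ℂ] H := LinearEquiv.ofBijective T.toFun ⟨hinj, hsurj⟩
  let Slin : H →ₗ[ℂ] H := T.domain.subtype.comp (e.symm : H →ₗ[ℂ] T.domain)
  have hbound : ∀ y : H, ‖Slin y‖ ≤ c⁻¹ * ‖y‖ := by
    intro y
    have h1 : T (e.symm y) = y := e.apply_symm_apply y
    have h2 := hlb (e.symm y)
    rw [h1] at h2
    have h3 := mul_le_mul_of_nonneg_left h2 (inv_pos.mpr hc).le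
    rwa [← mul_assoc, inv_mul_cancel₀ hc.ne', one_mul] at h3
  let S : H →L[ℂ] H := Slin.mkContinuous c⁻¹ hbound
  refine ⟨S, fun y => ?_, fun x => ?_, fun y => hbound y⟩
  · exact ⟨(e.symm y).2, e.apply_symm_apply y⟩
  · exact congrArg Subtype.val (e.symm_apply_apply x)

lemma shift_hasBoundedInverse (T : H →ₗ.[ℂ] H) {S : H →L[ℂ] H}
    (hS1 : ∀ y : H, ∃ hy : S y ∈ T.domain, T ⟨S y, hy⟩ = y)
    (hS2 : ∀ x : T.domain, S (T x) = (x : H)) {μ : ℂ}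
    (hU : IsUnit (1 - μ • S)) : HasBoundedInverse (shiftOp T μ) := by
  obtain ⟨u, hu⟩ := hU
  set R : H →L[ℂ] H := ↑u⁻¹ with hRdef
  have hR1 : ∀ y, (1 - μ • S) (R y) = y := by
    intro y
    have h := congrArg (fun A : H →L[ℂ] H => A y) u.mul_inv
    simpa [hu] using h
  have hR2 : ∀ y, R ((1 - μ • S) y) = y := by
    intro y
    have h := congrArg (fun A : H →L[ℂ] H => A y) u.inv_mul
    simpa [hu] using h
  refine ⟨S.comp R, fun y => ?_, fun x => ?_⟩
  · obtain ⟨hy, hTy⟩ := hS1 (R y)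
    refine ⟨hy, ?_⟩
    have : shiftOp T μ ⟨S.comp R y, hy⟩ = T ⟨S (R y), hy⟩ - μ • (S (R y)) := rfl
    rw [this, hTy]
    have := hR1 y
    simpa [ContinuousLinearMap.sub_apply, ContinuousLinearMap.smul_apply] using this
  · -- x : (shiftOp T μ).domain = T.domain
    have hcomp : shiftOp T μ x = (1 - μ • S) (T x) := by
      have h1 : shiftOp T μ x = T x - μ • (x : H) := rfl
      have h2 : S (T x) = (x : H) := hS2 x
      simp [h1, ContinuousLinearMap.sub_apply, ContinuousLinearMap.smul_apply, h2]
    rw [ContinuousLinearMap.comp_apply, hcomp, hR2]; exact hS2 x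

lemma isUnit_of_shift_hasBoundedInverse (T : H →ₗ.[ℂ] H) {S : H →L[ℂ] H}
    (hS1 : ∀ y : H, ∃ hy : S y ∈ T.domain, T ⟨S y, hy⟩ = y)
    (hS2 : ∀ x : T.domain, S (T x) = (x : H)) {μ : ℂ}
    (hB : HasBoundedInverse (shiftOp T μ)) : IsUnit (1 - μ • S) := by
  obtain ⟨B, hB1, hB2⟩ := hB
  have hBdom : ∀ y, B y ∈ T.domain := fun y => (hB1 y).1
  have hTB : ∀ y, T ⟨B y, hBdom y⟩ = y + μ • B y := by
    intro y
    obtain ⟨hy, hTy⟩ := hB1 y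
    have : shiftOp T μ ⟨B y, hy⟩ = T ⟨B y, hy⟩ - μ • B y := rfl
    rw [this] at hTy
    have := hTy
    linear_combination (norm := module) this
  have h1 : (1 - μ • S) * (1 + μ • B) = 1 := by
    ext y
    have hSV : S ((1 + μ • B) y) = B y := by
      have h3 : (1 + μ • B) y = T ⟨B y, hBdom y⟩ := by
        rw [hTB y]; simp [ContinuousLinearMap.add_apply, ContinuousLinearMap.smul_apply]
      rw [h3, hS2 ⟨B y, hBdom y⟩]
    have e1 : ((1 - μ • S) * (1 + μ • B)) y
        = (1 + μ • B) y - μ • S ((1 + μ • B) y) := by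
      simp only [ContinuousLinearMap.mul_apply, ContinuousLinearMap.sub_apply,
        ContinuousLinearMap.smul_apply, ContinuousLinearMap.one_apply]
    rw [ContinuousLinearMap.one_apply, e1, hSV]
    simp only [ContinuousLinearMap.add_apply, ContinuousLinearMap.smul_apply,
      ContinuousLinearMap.one_apply]
    abel
  have h2 : (1 + μ • B) * (1 - μ • S) = 1 := by
    ext y
    obtain ⟨hy, hTy⟩ := hS1 y
    have hw : (1 - μ • S) y = shiftOp T μ ⟨S y, hy⟩ := by
      have : shiftOp T μ ⟨S y, hy⟩ = T ⟨S y, hy⟩ - μ • (S y) := rfl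
      rw [this, hTy]
      simp [ContinuousLinearMap.sub_apply, ContinuousLinearMap.smul_apply]
    have hBw : B ((1 - μ • S) y) = S y := by rw [hw, hB2 ⟨S y, hy⟩]
    have e1 : ((1 + μ • B) * (1 - μ • S)) y
        = (1 - μ • S) y + μ • B ((1 - μ • S) y) := by
      simp only [ContinuousLinearMap.mul_apply, ContinuousLinearMap.add_apply,
        ContinuousLinearMap.smul_apply, ContinuousLinearMap.one_apply]
    rw [ContinuousLinearMap.one_apply, e1, hBw]
    simp only [ContinuousLinearMap.sub_apply, ContinuousLinearMap.smul_apply,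
      ContinuousLinearMap.one_apply]
    abel
  exact ⟨⟨1 - μ • S, 1 + μ • B, h1, h2⟩, rfl⟩

lemma inverse_paranormal (T : H →ₗ.[ℂ] H) (hpara : Paranormal T) {S : H →L[ℂ] H}
    (hS1 : ∀ y : H, ∃ hy : S y ∈ T.domain, T ⟨S y, hy⟩ = y)
    (hS2 : ∀ x : T.domain, S (T x) = (x : H)) :
    ∀ y : H, ‖S y‖ ^ 2 ≤ ‖S (S y)‖ * ‖y‖ := by
  intro y
  obtain ⟨h1, hT1⟩ := hS1 y
  set x1 : T.domain := ⟨S y, h1⟩ with hx1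
  obtain ⟨h2, hT2⟩ := hS1 (x1 : H)
  set x2 : T.domain := ⟨S (x1 : H), h2⟩ with hx2
  have hmem : T x2 ∈ T.domain := by rw [hT2]; exact x1.2
  have hp := hpara x2 hmem
  have hxx : (⟨T x2, hmem⟩ : T.domain) = x1 := Subtype.ext hT2
  rw [hxx, hT1] at hp
  have e1 : ‖T x2‖ = ‖S y‖ := by rw [hT2]
  have e2 : ‖(x2 : H)‖ = ‖S (S y)‖ := rfl
  rw [e1, e2] at hp
  linarith [hp]

lemma pn_chain (S : H →L[ℂ] H) (hPN : ∀ y : H, ‖S y‖ ^ 2 ≤ ‖S (S y)‖ * ‖y‖) (y : H) :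
    ∀ n : ℕ, ‖S y‖ * ‖(S ^ n) y‖ ≤ ‖y‖ * ‖(S ^ (n + 1)) y‖ := by
  intro n
  induction n with
  | zero => simp [mul_comm]
  | succ n ih =>
    have hps : ∀ k : ℕ, (S ^ (k + 1)) y = S ((S ^ k) y) := by
      intro k
      rw [pow_succ']
      rfl
    have hpn := hPN ((S ^ n) y)
    rw [← hps n, ← hps (n+1)] at hpn
    rcases eq_or_lt_of_le (norm_nonneg ((S ^ (n+1)) y)) with hz | hz
    · rw [← hz, mul_zero]
      positivity
    · have key : (‖S y‖ * ‖(S ^ (n+1)) y‖) * ‖(S ^ (n+1)) y‖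
          ≤ (‖y‖ * ‖(S ^ (n+2)) y‖) * ‖(S ^ (n+1)) y‖ := by
        nlinarith [norm_nonneg (S y), norm_nonneg y, norm_nonneg ((S ^ n) y),
          norm_nonneg ((S ^ (n+1)) y), norm_nonneg ((S ^ (n+2)) y)]
      exact le_of_mul_le_mul_right key hz

lemma pn_pow_ineq (S : H →L[ℂ] H) (hPN : ∀ y : H, ‖S y‖ ^ 2 ≤ ‖S (S y)‖ * ‖y‖) (y : H) :
    ∀ n : ℕ, ‖S y‖ ^ (n + 1) ≤ ‖(S ^ (n + 1)) y‖ * ‖y‖ ^ n := by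
  intro n
  induction n with
  | zero => simp
  | succ n ih =>
    have hc := pn_chain S hPN y (n + 1)
    calc ‖S y‖ ^ (n + 2) = ‖S y‖ ^ (n + 1) * ‖S y‖ := by ring
      _ ≤ (‖(S ^ (n + 1)) y‖ * ‖y‖ ^ n) * ‖S y‖ := by
          apply mul_le_mul_of_nonneg_right ih (norm_nonneg _)
      _ = ‖y‖ ^ n * (‖S y‖ * ‖(S ^ (n + 1)) y‖) := by ring
      _ ≤ ‖y‖ ^ n * (‖y‖ * ‖(S ^ (n + 2)) y‖) := by
          apply mul_le_mul_of_nonneg_left hc (by positivity)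
      _ = ‖(S ^ (n + 2)) y‖ * ‖y‖ ^ (n + 1) := by ring

lemma nnnorm_le_specRadius [Nontrivial H] (S : H →L[ℂ] H)
    (hPN : ∀ y : H, ‖S y‖ ^ 2 ≤ ‖S (S y)‖ * ‖y‖) :
    (‖S‖₊ : ℝ≥0∞) ≤ spectralRadius ℂ S := by
  -- step 1: unit vectors
  have hx1 : ∀ x : H, ‖x‖ = 1 → (‖S x‖₊ : ℝ≥0∞) ≤ spectralRadius ℂ S := by
    intro x hx
    have hev : ∀ᶠ n : ℕ in Filter.atTop,
        (‖S x‖₊ : ℝ≥0∞) ≤ (‖S ^ n‖₊ : ℝ≥0∞) ^ (1 / (n : ℝ)) := by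
      filter_upwards [Filter.eventually_ge_atTop 1] with n hn
      obtain ⟨m, rfl⟩ := Nat.exists_eq_add_of_le hn
      have h1 : ‖S x‖ ^ (m + 1) ≤ ‖S ^ (m + 1)‖ := by
        have h2 := pn_pow_ineq S hPN x m
        have h3 : ‖(S ^ (m + 1)) x‖ ≤ ‖S ^ (m + 1)‖ := by
          calc ‖(S ^ (m + 1)) x‖ ≤ ‖S ^ (m + 1)‖ * ‖x‖ := (S ^ (m+1)).le_opNorm x
            _ = ‖S ^ (m + 1)‖ := by rw [hx, mul_one]
        rw [hx, one_pow, mul_one] at h2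
        linarith
      have h1' : ‖S x‖₊ ^ (m + 1) ≤ ‖S ^ (m + 1)‖₊ := by
        rw [← NNReal.coe_le_coe]
        push_cast
        exact h1
      have h2' : ((‖S x‖₊ : ℝ≥0∞) ^ ((m : ℕ) + 1 : ℕ)) ^ (1 / ((1 + m : ℕ) : ℝ))
          ≤ ((‖S ^ (1 + m)‖₊ : ℝ≥0∞)) ^ (1 / ((1 + m : ℕ) : ℝ)) := by
        apply ENNReal.rpow_le_rpow _ (by positivity)
        rw [Nat.add_comm 1 m]
        exact_mod_cast ENNReal.coe_le_coe.mpr h1'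
      have h3' : ((‖S x‖₊ : ℝ≥0∞) ^ ((m : ℕ) + 1 : ℕ)) ^ (1 / ((1 + m : ℕ) : ℝ))
          = (‖S x‖₊ : ℝ≥0∞) := by
        rw [← ENNReal.rpow_natCast, ← ENNReal.rpow_mul]
        rw [show ((1 + m : ℕ) : ℝ) = ((m : ℕ) + 1 : ℕ) by push_cast; ring]
        rw [mul_one_div, div_self (by positivity), ENNReal.rpow_one]
      rw [← h3']
      exact h2'
    exact ge_of_tendsto (spectrum.pow_nnnorm_pow_one_div_tendsto_nhds_spectralRadius S) hev
  -- step 2: all vectors, via opNorm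
  have hfin : spectralRadius ℂ S ≠ ⊤ :=
    (lt_of_le_of_lt (spectrum.spectralRadius_le_nnnorm S) ENNReal.coe_lt_top).ne
  set ρ : ℝ := (spectralRadius ℂ S).toReal with hρ
  have hρ0 : 0 ≤ ρ := ENNReal.toReal_nonneg
  have hbd : ∀ x : H, ‖S x‖ ≤ ρ * ‖x‖ := by
    intro x
    rcases eq_or_ne x 0 with rfl | hx0
    · simp
    · have hnx : ‖x‖ ≠ 0 := norm_ne_zero_iff.mpr hx0
      set u : H := ((‖x‖⁻¹ : ℝ) : ℂ) • x with hu
      have hun : ‖u‖ = 1 := by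
        rw [hu, norm_smul]
        simp [norm_inv, abs_of_nonneg (norm_nonneg x), inv_mul_cancel₀ hnx]
      have h1 := hx1 u hun
      have h2 : ‖S u‖ ≤ ρ := by
        have := ENNReal.toReal_mono hfin h1
        simpa using this
      have h3 : ‖S u‖ = ‖x‖⁻¹ * ‖S x‖ := by
        simp [hu, norm_smul, abs_of_nonneg (norm_nonneg x)]
      rw [h3] at h2
      calc ‖S x‖ = ‖x‖ * (‖x‖⁻¹ * ‖S x‖) := by field_simp
        _ ≤ ‖x‖ * ρ := mul_le_mul_of_nonneg_left h2 (norm_nonneg x)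
        _ = ρ * ‖x‖ := mul_comm _ _
  have h4 : ‖S‖ ≤ ρ := S.opNorm_le_bound hρ0 hbd
  have h5 : ‖S‖₊ ≤ (spectralRadius ℂ S).toNNReal := by
    rw [← NNReal.coe_le_coe]
    exact h4
  calc (‖S‖₊ : ℝ≥0∞) ≤ ((spectralRadius ℂ S).toNNReal : ℝ≥0∞) := ENNReal.coe_le_coe.mpr h5
    _ = spectralRadius ℂ S := ENNReal.coe_toNNReal hfin

lemma isUnit_algebraMap_inv_sub_iff {μ : ℂ} (hμ : μ ≠ 0) (S : H →L[ℂ] H) :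
    IsUnit ((algebraMap ℂ (H →L[ℂ] H)) μ⁻¹ - S) ↔ IsUnit (1 - μ • S) := by
  have hmap : ∀ c : ℂ, c ≠ 0 → IsUnit ((algebraMap ℂ (H →L[ℂ] H)) c) :=
    fun c hc => (isUnit_iff_ne_zero.mpr hc).map (algebraMap ℂ (H →L[ℂ] H))
  have key : 1 - μ • S
      = (algebraMap ℂ (H →L[ℂ] H)) μ * ((algebraMap ℂ (H →L[ℂ] H)) μ⁻¹ - S) := by
    rw [mul_sub, ← map_mul, mul_inv_cancel₀ hμ, map_one]
    rw [Algebra.algebraMap_eq_smul_one, smul_mul_assoc, one_mul]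
  constructor
  · intro h
    rw [key]
    exact (hmap μ hμ).mul h
  · intro h
    rw [key] at h
    have h2 : (algebraMap ℂ (H →L[ℂ] H)) μ⁻¹ - S
        = (algebraMap ℂ (H →L[ℂ] H)) μ⁻¹
          * ((algebraMap ℂ (H →L[ℂ] H)) μ * ((algebraMap ℂ (H →L[ℂ] H)) μ⁻¹ - S)) := by
      rw [← mul_assoc, ← map_mul, inv_mul_cancel₀ hμ, map_one, one_mul]
    rw [h2]
    exact (hmap μ⁻¹ (inv_ne_zero hμ)).mul h

end Aux

section Main

set_option linter.unusedSectionVars false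
open scoped ENNReal NNReal

variable {H : Type*} [NormedAddCommGroup H] [InnerProductSpace ℂ H] [CompleteSpace H]

theorem stmt15' (T : H →ₗ.[ℂ] H) (hdense : Dense (T.domain : Set H)) (hclosed : T.IsClosed)
    (hpara : Paranormal T) (hker : kernelSet T 0 = kernelSet (T†) 0) :
    sInf ((fun x : T.domain => ‖T x‖) '' {x : T.domain | ‖(x : H)‖ = 1}) =
      sInf ((fun μ : ℂ => ‖μ‖) '' pSpectrum T) := by
  classical
  by_cases hH : Nontrivial H
  case neg =>
    have hsub : Subsingleton H := not_nontrivial_iff_subsingleton.mp hH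
    have h1 : {x : T.domain | ‖(x : H)‖ = 1} = ∅ := by
      ext x
      simp only [Set.mem_setOf_eq, Set.mem_empty_iff_false, iff_false]
      rw [Subsingleton.elim (x : H) 0, norm_zero]
      norm_num
    have h2 : pSpectrum T = ∅ := by
      ext μ
      simp only [pSpectrum, Set.mem_setOf_eq, Set.mem_empty_iff_false, iff_false, not_not]
      refine ⟨0, fun y => ⟨?_, Subsingleton.elim _ _⟩, fun x => Subsingleton.elim _ _⟩
      rw [Subsingleton.elim ((0 : H →L[ℂ] H) y) (0 : H)]
      exact (shiftOp T μ).domain.zero_mem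
    rw [h1, h2]
    simp
  case pos =>
    -- a nonzero element of the domain
    obtain ⟨x₀, hx₀mem, hx₀ne⟩ : ∃ x, x ∈ T.domain ∧ x ≠ 0 := by
      by_contra hc
      push_neg at hc
      obtain ⟨y, hy⟩ := exists_ne (0 : H)
      have hyc : y ∈ closure (T.domain : Set H) := hdense y
      have hsub : (T.domain : Set H) ⊆ {0} := fun z hz => hc z hz
      have : y ∈ closure ({0} : Set H) := closure_mono hsub hyc
      rw [closure_singleton] at this
      exact hy this
    have hnx₀ : ‖x₀‖ ≠ 0 := norm_ne_zero_iff.mpr hx₀ne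
    obtain ⟨e, he⟩ : ∃ e : T.domain, ‖(e : H)‖ = 1 := by
      refine ⟨⟨((‖x₀‖⁻¹ : ℝ) : ℂ) • x₀, T.domain.smul_mem _ hx₀mem⟩, ?_⟩
      show ‖((‖x₀‖⁻¹ : ℝ) : ℂ) • x₀‖ = 1
      rw [norm_smul]
      simp [abs_of_nonneg (norm_nonneg x₀), inv_mul_cancel₀ hnx₀]
    set K1 := (fun x : T.domain => ‖T x‖) '' {x : T.domain | ‖(x : H)‖ = 1} with hK1
    have hK1ne : K1.Nonempty := ⟨‖T e‖, e, he, rfl⟩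
    have hK1lb : ∀ r ∈ K1, 0 ≤ r := by
      rintro r ⟨x, hx, rfl⟩
      exact norm_nonneg _
    have hK1bdd : BddBelow K1 := ⟨0, hK1lb⟩
    set m := sInf K1 with hm_def
    have hm0 : 0 ≤ m := le_csInf hK1ne hK1lb
    have hKm : ∀ x : T.domain, ‖(x : H)‖ = 1 → m ≤ ‖T x‖ :=
      fun x hx => csInf_le hK1bdd ⟨x, hx, rfl⟩
    rcases eq_or_lt_of_le hm0 with hm | hm
    case inl =>
      -- m = 0 : show 0 ∈ pSpectrum T, hence both sides are 0
      have h0spec : (0 : ℂ) ∈ pSpectrum T := by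
        intro hB
        obtain ⟨S, hS1, hS2⟩ := hB
        have hS2' : ∀ x : T.domain, S (T x) = (x : H) := by
          intro x
          have := hS2 x
          rwa [shiftOp_zero_apply] at this
        have hSne : S ≠ 0 := by
          intro h0
          have := hS2' e
          rw [h0] at this
          simp only [ContinuousLinearMap.zero_apply] at this
          rw [← this, norm_zero] at he
          norm_num at he
        have hSpos : 0 < ‖S‖ := norm_pos_iff.mpr hSne
        have hlow : ∀ r ∈ K1, ‖S‖⁻¹ ≤ r := by
          rintro r ⟨x, hx, rfl⟩
          have h1 : ‖(x : H)‖ ≤ ‖S‖ * ‖T x‖ := by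
            rw [← hS2' x]
            exact S.le_opNorm _
          rw [hx] at h1
          rw [inv_le_iff_one_le_mul₀ hSpos]
          linarith [mul_comm ‖S‖ ‖T x‖]
        have : ‖S‖⁻¹ ≤ m := le_csInf hK1ne hlow
        have : (0:ℝ) < m := lt_of_lt_of_le (inv_pos.mpr hSpos) this
        rw [← hm] at this
        exact lt_irrefl _ this
      have hK2mem : (0:ℝ) ∈ (fun μ : ℂ => ‖μ‖) '' pSpectrum T := ⟨0, h0spec, norm_zero⟩
      have h2 : sInf ((fun μ : ℂ => ‖μ‖) '' pSpectrum T) = 0 := by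
        apply le_antisymm
        · exact csInf_le ⟨0, by rintro r ⟨μ, hμ, rfl⟩; exact norm_nonneg _⟩ hK2mem
        · exact le_csInf ⟨0, hK2mem⟩ (by rintro r ⟨μ, hμ, rfl⟩; exact norm_nonneg _)
      rw [h2]
      exact hm.symm
    case inr =>
      -- m > 0
      have hlb : ∀ x : T.domain, m * ‖(x : H)‖ ≤ ‖T x‖ := by
        intro x
        rcases eq_or_ne (x : H) 0 with hx0 | hx0
        · have : x = 0 := Subtype.ext hx0
          rw [this]
          simp
        · have hnx : ‖(x : H)‖ ≠ 0 := norm_ne_zero_iff.mpr hx0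
          set u : T.domain := ((‖(x : H)‖⁻¹ : ℝ) : ℂ) • x with hu
          have hun : ‖(u : H)‖ = 1 := by
            show ‖((‖(x : H)‖⁻¹ : ℝ) : ℂ) • (x : H)‖ = 1
            rw [norm_smul]
            simp [abs_of_nonneg (norm_nonneg (x : H)), inv_mul_cancel₀ hnx]
          have h1 := hKm u hun
          have h2 : ‖T u‖ = ‖(x:H)‖⁻¹ * ‖T x‖ := by
            rw [hu, T.map_smul, norm_smul]
            simp [abs_of_nonneg (norm_nonneg (x : H))]
          rw [h2] at h1
          calc m * ‖(x : H)‖ ≤ (‖(x:H)‖⁻¹ * ‖T x‖) * ‖(x : H)‖ :=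
                mul_le_mul_of_nonneg_right h1 (norm_nonneg _)
            _ = ‖T x‖ := by field_simp
      obtain ⟨S, hS1, hS2, hSbd⟩ := exists_boundedInverse T hdense hclosed hker hm hlb
      have hSnorm_le : ‖S‖ ≤ m⁻¹ := S.opNorm_le_bound (by positivity) hSbd
      have hSne : S ≠ 0 := by
        intro h0
        have := hS2 e
        rw [h0] at this
        simp only [ContinuousLinearMap.zero_apply] at this
        rw [← this, norm_zero] at he
        norm_num at he
      have hSpos : 0 < ‖S‖ := norm_pos_iff.mpr hSne
      have hSnorm_ge : m⁻¹ ≤ ‖S‖ := by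
        -- for each unit x : 1 ≤ ‖S‖ ‖T x‖, so ‖S‖⁻¹ ≤ ‖T x‖, so ‖S‖⁻¹ ≤ m, so m⁻¹ ≤ ‖S‖
        have hlow : ∀ r ∈ K1, ‖S‖⁻¹ ≤ r := by
          rintro r ⟨x, hx, rfl⟩
          have h1 : ‖(x : H)‖ ≤ ‖S‖ * ‖T x‖ := by
            rw [← hS2 x]
            exact S.le_opNorm _
          rw [hx] at h1
          rw [inv_le_iff_one_le_mul₀ hSpos]
          linarith [mul_comm ‖S‖ ‖T x‖]
        have h2 : ‖S‖⁻¹ ≤ m := le_csInf hK1ne hlow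
        calc m⁻¹ ≤ (‖S‖⁻¹)⁻¹ := by
              apply inv_anti₀ (inv_pos.mpr hSpos) h2
          _ = ‖S‖ := inv_inv _
      have hSnorm : ‖S‖ = m⁻¹ := le_antisymm hSnorm_le hSnorm_ge
      -- lower bound: every spectral point has modulus ≥ m
      have hspec_lb : ∀ μ : ℂ, μ ∈ pSpectrum T → m ≤ ‖μ‖ := by
        intro μ hμ
        by_contra hcon
        push_neg at hcon
        rcases eq_or_ne μ 0 with rfl | hμ0
        · exact hμ (shift_hasBoundedInverse T hS1 hS2 (by simp))
        · -- ‖μ⁻¹‖ > m⁻¹ = ‖S‖, so μ⁻¹ ∉ spectrum S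
          have hnotmem : μ⁻¹ ∉ spectrum ℂ S := by
            intro hmem
            have := spectrum.norm_le_norm_of_mem hmem
            rw [norm_inv, hSnorm] at this
            have hμpos : 0 < ‖μ‖ := norm_pos_iff.mpr hμ0
            have : m ≤ ‖μ‖ := by
              rw [inv_le_inv₀ hμpos hm] at this
              exact this
            exact absurd this (not_le.mpr hcon)
          have hunit := spectrum.notMem_iff.mp hnotmem
          have := (isUnit_algebraMap_inv_sub_iff hμ0 S).mp hunit
          exact hμ (shift_hasBoundedInverse T hS1 hS2 this)
      -- the spectral point of modulus exactly m
      have hPN := inverse_paranormal T hpara hS1 hS2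
      have hrad_ge := nnnorm_le_specRadius S hPN
      have hrad : spectralRadius ℂ S = (‖S‖₊ : ℝ≥0∞) :=
        le_antisymm (spectrum.spectralRadius_le_nnnorm S) hrad_ge
      obtain ⟨ν, hν_mem, hν_max⟩ :=
        (spectrum.isCompact (𝕜 := ℂ) S).exists_isMaxOn (spectrum.nonempty S)
          (continuous_norm.continuousOn)
      have hν_norm : ‖ν‖ = ‖S‖ := by
        apply le_antisymm (spectrum.norm_le_norm_of_mem hν_mem)
        have h1 : spectralRadius ℂ S ≤ (‖ν‖₊ : ℝ≥0∞) := by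
          rw [spectralRadius]
          exact iSup₂_le fun k hk => by
            exact_mod_cast ENNReal.coe_le_coe.mpr (by exact_mod_cast hν_max hk)
        rw [hrad] at h1
        exact_mod_cast ENNReal.coe_le_coe.mp h1
      have hν_ne : ν ≠ 0 := by
        intro h0
        rw [h0, norm_zero] at hν_norm
        exact hSne (norm_eq_zero.mp hν_norm.symm)
      set μ₀ : ℂ := ν⁻¹ with hμ₀
      have hμ₀ne : μ₀ ≠ 0 := inv_ne_zero hν_ne
      have hμ₀norm : ‖μ₀‖ = m := by
        rw [hμ₀, norm_inv, hν_norm, hSnorm, inv_inv]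
      have hμ₀spec : μ₀ ∈ pSpectrum T := by
        intro hB
        have hunit := isUnit_of_shift_hasBoundedInverse T hS1 hS2 hB
        have := (isUnit_algebraMap_inv_sub_iff hμ₀ne S).mpr hunit
        have hnot : μ₀⁻¹ ∉ spectrum ℂ S := spectrum.notMem_iff.mpr this
        rw [hμ₀, inv_inv] at hnot
        exact hnot hν_mem
      -- conclude
      have hK2mem : m ∈ (fun μ : ℂ => ‖μ‖) '' pSpectrum T := ⟨μ₀, hμ₀spec, hμ₀norm⟩
      have h2 : sInf ((fun μ : ℂ => ‖μ‖) '' pSpectrum T) = m := by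
        apply le_antisymm
        · exact csInf_le ⟨0, by rintro r ⟨μ, hμ, rfl⟩; exact norm_nonneg _⟩ hK2mem
        · exact le_csInf ⟨m, hK2mem⟩ (by rintro r ⟨μ, hμ, rfl⟩; exact hspec_lb μ hμ)
      rw [h2]

end Main

/-- For a densely defined closed paranormal operator with `N(T) = N(T*)`, the minimum modulus
equals the distance from `0` to the spectrum. -/
theorem stmt15 (T : H →ₗ.[ℂ] H) (hdense : Dense (T.domain : Set H)) (hclosed : T.IsClosed)
    (hpara : Paranormal T) (hker : kernelSet T 0 = kernelSet (T†) 0) :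
    sInf ((fun x : T.domain => ‖T x‖) '' {x : T.domain | ‖(x : H)‖ = 1}) =
      sInf ((fun μ : ℂ => ‖μ‖) '' pSpectrum T) := stmt15' T hdense hclosed hpara hker

end
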